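/- For every urn i ∈ {1,…,n}, the probability that a voter votes for the correct urn i satisfies 1/n ≤ E_i(i) ≤ 4n/(ε·M). -/

import Mathlib

set_option maxHeartbeats 2000000


/-- For every urn i ∈ {1,…,n}, the probability that a voter votes for the
correct urn i satisfies 1/n ≤ E_i(i) ≤ 4n/(ε·M). -/
theorem stmt_2
    (n : ℕ) (hn : 2 ≤ n)
    (p : ℕ → ℝ)
    (hp0 : 0 ≤ p 1) (hp1 : p n ≤ 1)
    (hmono : ∀ i ∈ Finset.Ico 1 n, p i < p (i + 1))
    (ε : ℝ)
    (hε : IsLeast {x : ℝ | ∃ i, 1 ≤ i ∧ i < n ∧ x = p (i + 1) - p i} ε)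
    (b r : ℕ → ℝ)
    (hb : ∀ k, b k = ∑ ℓ ∈ Finset.Ico 1 k, (2 - (p (ℓ + 1) + p ℓ)) / (p (ℓ + 1) - p ℓ))
    (hr : ∀ k, r k = ∑ ℓ ∈ Finset.Ico k n, (p (ℓ + 1) + p ℓ) / (p (ℓ + 1) - p ℓ))
    (R B M : ℝ)
    (hR : R = ∑ k ∈ Finset.Icc 1 n, r k)
    (hB : B = ∑ k ∈ Finset.Icc 1 n, b k)
    (hM : M = max R B)
    (Rv Bv : ℕ → ℝ)
    (hRv : ∀ j, Rv j = (r j + (M - R) / n) / M)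
    (hBv : ∀ j, Bv j = (b j + (M - B) / n) / M)
    (E : ℕ → ℕ → ℝ)
    (hE : ∀ i j, E i j = p i * Bv j + (1 - p i) * Rv j) :
    ∀ i ∈ Finset.Icc 1 n, 1 / (n : ℝ) ≤ E i i ∧ E i i ≤ 4 * n / (ε * M) := by
  have hn2 : (2:ℝ) ≤ (n:ℝ) := by exact_mod_cast hn
  have hn0 : (0:ℝ) < (n:ℝ) := by linarith
  -- monotonicity of p on [1, n]
  have hmono' : ∀ a c : ℕ, 1 ≤ a → a ≤ c → c ≤ n → p a ≤ p c := by
    intro a c ha hac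
    induction c, hac using Nat.le_induction with
    | base => intro _; exact le_refl _
    | succ c hac ih =>
      intro hcn
      have hcn' : c < n := by omega
      have h1 : p c < p (c + 1) := hmono c (Finset.mem_Ico.mpr ⟨by omega, hcn'⟩)
      have h2 : p a ≤ p c := ih (by omega)
      linarith
  -- positive gaps and ε
  have hgap0 : ∀ ℓ, 1 ≤ ℓ → ℓ < n → 0 < p (ℓ + 1) - p ℓ := by
    intro ℓ h1 h2
    have := hmono ℓ (Finset.mem_Ico.mpr ⟨h1, h2⟩)
    linarith
  have hεpos : 0 < ε := by
    obtain ⟨i, hi1, hin, hieq⟩ := hε.1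
    have := hgap0 i hi1 hin
    linarith
  have hgap : ∀ ℓ, 1 ≤ ℓ → ℓ < n → ε ≤ p (ℓ + 1) - p ℓ := by
    intro ℓ h1 h2
    exact hε.2 ⟨ℓ, h1, h2, rfl⟩
  -- bounds on values of p
  have hpl : ∀ ℓ, 1 ≤ ℓ → ℓ ≤ n → 0 ≤ p ℓ ∧ p ℓ ≤ 1 := by
    intro ℓ h1 h2
    exact ⟨le_trans hp0 (hmono' 1 ℓ le_rfl h1 h2),
           le_trans (hmono' ℓ n h1 h2 le_rfl) hp1⟩
  -- termwise bounds
  have hterm_r : ∀ ℓ, 1 ≤ ℓ → ℓ < n →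
      0 ≤ (p (ℓ + 1) + p ℓ) / (p (ℓ + 1) - p ℓ) ∧
      (p (ℓ + 1) + p ℓ) / (p (ℓ + 1) - p ℓ) ≤ 2 / ε := by
    intro ℓ h1 h2
    have hg := hgap0 ℓ h1 h2
    have hge := hgap ℓ h1 h2
    have h3 := hpl ℓ h1 (by omega)
    have h4 := hpl (ℓ+1) (by omega) (by omega)
    constructor
    · apply div_nonneg (by linarith) (by linarith)
    · apply div_le_div₀ (by norm_num) (by linarith) hεpos hge
  have hterm_b : ∀ ℓ, 1 ≤ ℓ → ℓ < n →
      0 ≤ (2 - (p (ℓ + 1) + p ℓ)) / (p (ℓ + 1) - p ℓ) ∧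
      (2 - (p (ℓ + 1) + p ℓ)) / (p (ℓ + 1) - p ℓ) ≤ 2 / ε := by
    intro ℓ h1 h2
    have hg := hgap0 ℓ h1 h2
    have hge := hgap ℓ h1 h2
    have h3 := hpl ℓ h1 (by omega)
    have h4 := hpl (ℓ+1) (by omega) (by omega)
    constructor
    · apply div_nonneg (by linarith) (by linarith)
    · apply div_le_div₀ (by norm_num) (by linarith) hεpos hge
  -- bounds on b k, r k
  have hbk : ∀ k, k ≤ n → 0 ≤ b k ∧ b k ≤ ((n:ℝ) - 1) * (2 / ε) := by
    intro k hk
    rw [hb]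
    constructor
    · apply Finset.sum_nonneg
      intro ℓ hℓ
      rw [Finset.mem_Ico] at hℓ
      exact (hterm_b ℓ hℓ.1 (by omega)).1
    · calc ∑ ℓ ∈ Finset.Ico 1 k, (2 - (p (ℓ + 1) + p ℓ)) / (p (ℓ + 1) - p ℓ)
          ≤ (Finset.Ico 1 k).card • (2 / ε) := by
            apply Finset.sum_le_card_nsmul
            intro ℓ hℓ
            rw [Finset.mem_Ico] at hℓ
            exact (hterm_b ℓ hℓ.1 (by omega)).2
        _ ≤ ((n:ℝ) - 1) * (2/ε) := by
            rw [Nat.card_Ico, nsmul_eq_mul]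
            have h2ε : 0 ≤ 2/ε := by positivity
            have hkn : ((k - 1 : ℕ):ℝ) ≤ (n:ℝ) - 1 := by
              have h1 : (k - 1 : ℕ) ≤ n - 1 := by omega
              have h2 : ((n - 1 : ℕ):ℝ) = (n:ℝ) - 1 := by
                push_cast [Nat.cast_sub (by omega : 1 ≤ n)]; ring
              calc ((k - 1 : ℕ):ℝ) ≤ ((n - 1 : ℕ):ℝ) := by exact_mod_cast h1
                _ = (n:ℝ) - 1 := h2
            exact mul_le_mul_of_nonneg_right hkn h2ε
  have hrk : ∀ k, 1 ≤ k → 0 ≤ r k ∧ r k ≤ ((n:ℝ) - 1) * (2 / ε) := by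
    intro k hk
    rw [hr]
    constructor
    · apply Finset.sum_nonneg
      intro ℓ hℓ
      rw [Finset.mem_Ico] at hℓ
      exact (hterm_r ℓ (by omega) hℓ.2).1
    · calc ∑ ℓ ∈ Finset.Ico k n, (p (ℓ + 1) + p ℓ) / (p (ℓ + 1) - p ℓ)
          ≤ (Finset.Ico k n).card • (2 / ε) := by
            apply Finset.sum_le_card_nsmul
            intro ℓ hℓ
            rw [Finset.mem_Ico] at hℓ
            exact (hterm_r ℓ (by omega) hℓ.2).2
        _ ≤ ((n:ℝ) - 1) * (2/ε) := by
            rw [Nat.card_Ico, nsmul_eq_mul]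
            have h2ε : 0 ≤ 2/ε := by positivity
            have : ((n - k : ℕ):ℝ) ≤ (n:ℝ) - 1 := by
              have : n - k ≤ n - 1 := by omega
              have h1 : ((n - k : ℕ):ℝ) ≤ ((n - 1 : ℕ):ℝ) := by exact_mod_cast this
              have h2 : ((n - 1 : ℕ):ℝ) = (n:ℝ) - 1 := by
                push_cast [Nat.cast_sub (by omega : 1 ≤ n)]; ring
              linarith
            exact mul_le_mul_of_nonneg_right this h2ε
  -- R, B, M
  have hR0 : 0 ≤ R := by
    rw [hR]; apply Finset.sum_nonneg
    intro k hk; rw [Finset.mem_Icc] at hk; exact (hrk k hk.1).1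
  have hB0 : 0 ≤ B := by
    rw [hB]; apply Finset.sum_nonneg
    intro k hk; rw [Finset.mem_Icc] at hk; exact (hbk k hk.2).1
  have hcard : (Finset.Icc 1 n).card = n := by rw [Nat.card_Icc]; omega
  have hMK : M ≤ (n:ℝ) * (((n:ℝ) - 1) * (2 / ε)) := by
    rw [hM]
    have hRK : R ≤ (n:ℝ) * (((n:ℝ) - 1) * (2 / ε)) := by
      rw [hR]
      calc ∑ k ∈ Finset.Icc 1 n, r k ≤ (Finset.Icc 1 n).card • (((n:ℝ) - 1) * (2 / ε)) := by
            apply Finset.sum_le_card_nsmul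
            intro k hk; rw [Finset.mem_Icc] at hk; exact (hrk k hk.1).2
        _ = (n:ℝ) * (((n:ℝ) - 1) * (2 / ε)) := by rw [hcard, nsmul_eq_mul]
    have hBK : B ≤ (n:ℝ) * (((n:ℝ) - 1) * (2 / ε)) := by
      rw [hB]
      calc ∑ k ∈ Finset.Icc 1 n, b k ≤ (Finset.Icc 1 n).card • (((n:ℝ) - 1) * (2 / ε)) := by
            apply Finset.sum_le_card_nsmul
            intro k hk; rw [Finset.mem_Icc] at hk; exact (hbk k hk.2).2
        _ = (n:ℝ) * (((n:ℝ) - 1) * (2 / ε)) := by rw [hcard, nsmul_eq_mul]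
    exact max_le hRK hBK
  have hMpos : 0 < M := by
    have hr1 : 0 < r 1 := by
      rw [hr]
      apply Finset.sum_pos'
      · intro ℓ hℓ
        rw [Finset.mem_Ico] at hℓ
        exact (hterm_r ℓ (by omega) hℓ.2).1
      · refine ⟨1, Finset.mem_Ico.mpr ⟨le_rfl, by omega⟩, ?_⟩
        have hg := hgap0 1 le_rfl (by omega)
        have h2 : p 1 < p 2 := by have := hmono 1 (Finset.mem_Ico.mpr ⟨le_rfl, by omega⟩); exact this
        apply div_pos (by linarith) (by linarith)
    have hRr : r 1 ≤ R := by
      rw [hR]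
      apply Finset.single_le_sum (f := r)
      · intro k hk; rw [Finset.mem_Icc] at hk; exact (hrk k hk.1).1
      · exact Finset.mem_Icc.mpr ⟨le_rfl, by omega⟩
    have : R ≤ M := by rw [hM]; exact le_max_left _ _
    linarith
  have hMne : M ≠ 0 := ne_of_gt hMpos
  have hnne : (n:ℝ) ≠ 0 := ne_of_gt hn0
  -- sums of Bv, Rv are 1
  have hsumBv : ∑ j ∈ Finset.Icc 1 n, Bv j = 1 := by
    simp only [hBv]
    rw [← Finset.sum_div, Finset.sum_add_distrib, Finset.sum_const, hcard, ← hB,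
        nsmul_eq_mul]
    field_simp
    ring
  have hsumRv : ∑ j ∈ Finset.Icc 1 n, Rv j = 1 := by
    simp only [hRv]
    rw [← Finset.sum_div, Finset.sum_add_distrib, Finset.sum_const, hcard, ← hR,
        nsmul_eq_mul]
    field_simp
    ring
  -- key inequality
  have hkey : ∀ i ∈ Finset.Icc 1 n, ∀ j ∈ Finset.Icc 1 n,
      p i * b j + (1 - p i) * r j ≤ p i * b i + (1 - p i) * r i := by
    intro i hi j hj
    rw [Finset.mem_Icc] at hi hj
    rcases le_total i j with hij | hij
    · have hbij : b j = b i + ∑ ℓ ∈ Finset.Ico i j,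
          (2 - (p (ℓ + 1) + p ℓ)) / (p (ℓ + 1) - p ℓ) := by
        rw [hb j, hb i, Finset.sum_Ico_consecutive _ hi.1 hij]
      have hrij : r i = r j + ∑ ℓ ∈ Finset.Ico i j,
          (p (ℓ + 1) + p ℓ) / (p (ℓ + 1) - p ℓ) := by
        rw [hr i, hr j, ← Finset.sum_Ico_consecutive _ hij hj.2]; ring
      have hS : p i * ∑ ℓ ∈ Finset.Ico i j, (2 - (p (ℓ + 1) + p ℓ)) / (p (ℓ + 1) - p ℓ)
          ≤ (1 - p i) * ∑ ℓ ∈ Finset.Ico i j, (p (ℓ + 1) + p ℓ) / (p (ℓ + 1) - p ℓ) := by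
        rw [Finset.mul_sum, Finset.mul_sum]
        apply Finset.sum_le_sum
        intro ℓ hℓ
        rw [Finset.mem_Ico] at hℓ
        have h1ℓ : 1 ≤ ℓ := le_trans hi.1 hℓ.1
        have hℓn : ℓ < n := lt_of_lt_of_le hℓ.2 hj.2
        have hg := hgap0 ℓ h1ℓ hℓn
        have hp1 : p i ≤ p ℓ := hmono' i ℓ hi.1 hℓ.1 (by omega)
        have hp2 : p i ≤ p (ℓ + 1) := hmono' i (ℓ+1) hi.1 (by omega) (by omega)
        have key : (1 - p i) * ((p (ℓ + 1) + p ℓ) / (p (ℓ + 1) - p ℓ))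
            - p i * ((2 - (p (ℓ + 1) + p ℓ)) / (p (ℓ + 1) - p ℓ))
            = (p (ℓ + 1) + p ℓ - 2 * p i) / (p (ℓ + 1) - p ℓ) := by
          field_simp
          ring
        have hnn : 0 ≤ (p (ℓ + 1) + p ℓ - 2 * p i) / (p (ℓ + 1) - p ℓ) :=
          div_nonneg (by linarith) (by linarith)
        linarith
      rw [hbij, hrij]
      nlinarith [hS]
    · have hbij : b i = b j + ∑ ℓ ∈ Finset.Ico j i,
          (2 - (p (ℓ + 1) + p ℓ)) / (p (ℓ + 1) - p ℓ) := by
        rw [hb i, hb j, Finset.sum_Ico_consecutive _ hj.1 hij]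
      have hrij : r j = r i + ∑ ℓ ∈ Finset.Ico j i,
          (p (ℓ + 1) + p ℓ) / (p (ℓ + 1) - p ℓ) := by
        rw [hr j, hr i, ← Finset.sum_Ico_consecutive _ hij hi.2]; ring
      have hS : (1 - p i) * ∑ ℓ ∈ Finset.Ico j i, (p (ℓ + 1) + p ℓ) / (p (ℓ + 1) - p ℓ)
          ≤ p i * ∑ ℓ ∈ Finset.Ico j i, (2 - (p (ℓ + 1) + p ℓ)) / (p (ℓ + 1) - p ℓ) := by
        rw [Finset.mul_sum, Finset.mul_sum]
        apply Finset.sum_le_sum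
        intro ℓ hℓ
        rw [Finset.mem_Ico] at hℓ
        have h1ℓ : 1 ≤ ℓ := le_trans hj.1 hℓ.1
        have hℓn : ℓ < n := lt_of_lt_of_le hℓ.2 hi.2
        have hg := hgap0 ℓ h1ℓ hℓn
        have hp1 : p ℓ ≤ p i := hmono' ℓ i h1ℓ (le_of_lt hℓ.2) hi.2
        have hp2 : p (ℓ + 1) ≤ p i := hmono' (ℓ+1) i (by omega) hℓ.2 hi.2
        have key : p i * ((2 - (p (ℓ + 1) + p ℓ)) / (p (ℓ + 1) - p ℓ))
            - (1 - p i) * ((p (ℓ + 1) + p ℓ) / (p (ℓ + 1) - p ℓ))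
            = (2 * p i - (p (ℓ + 1) + p ℓ)) / (p (ℓ + 1) - p ℓ) := by
          field_simp
          ring
        have hnn : 0 ≤ (2 * p i - (p (ℓ + 1) + p ℓ)) / (p (ℓ + 1) - p ℓ) :=
          div_nonneg (by linarith) (by linarith)
        linarith
      rw [hbij, hrij]
      nlinarith [hS]
  -- main
  intro i hi
  have hi' := Finset.mem_Icc.mp hi
  have hpi := hpl i hi'.1 hi'.2
  constructor
  · -- lower bound
    have hle : ∀ j ∈ Finset.Icc 1 n, E i j ≤ E i i := by
      intro j hj
      have hk := hkey i hi j hj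
      rw [hE i j, hE i i, hBv j, hRv j, hBv i, hRv i]
      have e1 : p i * ((b j + (M - B) / n) / M) + (1 - p i) * ((r j + (M - R) / n) / M)
          = (p i * b j + (1 - p i) * r j
             + (p i * ((M - B) / n) + (1 - p i) * ((M - R) / n))) / M := by
        field_simp; ring
      have e2 : p i * ((b i + (M - B) / n) / M) + (1 - p i) * ((r i + (M - R) / n) / M)
          = (p i * b i + (1 - p i) * r i
             + (p i * ((M - B) / n) + (1 - p i) * ((M - R) / n))) / M := by
        field_simp; ring
      rw [e1, e2, div_le_div_iff_of_pos_right hMpos]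
      linarith
    have hsumE : ∑ j ∈ Finset.Icc 1 n, E i j = 1 := by
      simp only [hE]
      rw [Finset.sum_add_distrib, ← Finset.mul_sum, ← Finset.mul_sum, hsumBv, hsumRv]
      ring
    have h1 : (1:ℝ) ≤ (n:ℝ) * E i i := by
      calc (1:ℝ) = ∑ j ∈ Finset.Icc 1 n, E i j := hsumE.symm
        _ ≤ ∑ _j ∈ Finset.Icc 1 n, E i i := Finset.sum_le_sum hle
        _ = (n:ℝ) * E i i := by rw [Finset.sum_const, hcard, nsmul_eq_mul]
    rw [div_le_iff₀ hn0]
    linarith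
  · -- upper bound
    rw [hE i i, hBv i, hRv i]
    have e2 : p i * ((b i + (M - B) / n) / M) + (1 - p i) * ((r i + (M - R) / n) / M)
        = (p i * b i + (1 - p i) * r i
           + (p i * ((M - B) / n) + (1 - p i) * ((M - R) / n))) / M := by
      rw [← mul_div_assoc, ← mul_div_assoc, ← add_div]
      congr 1
      ring
    have hgoal : (4:ℝ) * n / (ε * M) = (4 * n / ε) / M := by
      rw [div_div]
    rw [e2, hgoal, div_le_div_iff_of_pos_right hMpos]
    have hbi := hbk i hi'.2
    have hri := hrk i hi'.1
    have hBM : B ≤ M := by rw [hM]; exact le_max_right _ _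
    have hRM : R ≤ M := by rw [hM]; exact le_max_left _ _
    have hK : (0:ℝ) ≤ ((n:ℝ) - 1) * (2 / ε) :=
      mul_nonneg (by linarith) (by positivity)
    have hpi' : (0:ℝ) ≤ 1 - p i := by linarith [hpi.2]
    have h1 : p i * b i + (1 - p i) * r i ≤ ((n:ℝ) - 1) * (2 / ε) := by
      calc p i * b i + (1 - p i) * r i
          ≤ p i * (((n:ℝ) - 1) * (2 / ε)) + (1 - p i) * (((n:ℝ) - 1) * (2 / ε)) :=
            add_le_add (mul_le_mul_of_nonneg_left hbi.2 hpi.1)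
              (mul_le_mul_of_nonneg_left hri.2 hpi')
        _ = ((n:ℝ) - 1) * (2 / ε) := by ring
    have hMn : M / (n:ℝ) ≤ ((n:ℝ) - 1) * (2 / ε) := by
      rw [div_le_iff₀ hn0]
      linarith [hMK]
    have hc1 : 0 ≤ (M - B) / (n:ℝ) := div_nonneg (by linarith) hn0.le
    have hc2 : 0 ≤ (M - R) / (n:ℝ) := div_nonneg (by linarith) hn0.le
    have hc1' : (M - B) / (n:ℝ) ≤ M / (n:ℝ) := by
      rw [div_le_div_iff_of_pos_right hn0]; linarith
    have hc2' : (M - R) / (n:ℝ) ≤ M / (n:ℝ) := by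
      rw [div_le_div_iff_of_pos_right hn0]; linarith
    have h2 : p i * ((M - B) / n) + (1 - p i) * ((M - R) / n) ≤ ((n:ℝ) - 1) * (2 / ε) := by
      calc p i * ((M - B) / n) + (1 - p i) * ((M - R) / n)
          ≤ p i * (((n:ℝ) - 1) * (2 / ε)) + (1 - p i) * (((n:ℝ) - 1) * (2 / ε)) :=
            add_le_add (mul_le_mul_of_nonneg_left (le_trans hc1' hMn) hpi.1)
              (mul_le_mul_of_nonneg_left (le_trans hc2' hMn) hpi')
        _ = ((n:ℝ) - 1) * (2 / ε) := by ring
    have hinv : (0:ℝ) < 1 / ε := by positivity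
    have hfinal : ((n:ℝ) - 1) * (2 / ε) + ((n:ℝ) - 1) * (2 / ε) ≤ 4 * n / ε := by
      have e : (4:ℝ) * n / ε = ((n:ℝ) - 1) * (2 / ε) + ((n:ℝ) - 1) * (2 / ε) + 4 * (1 / ε) := by
        ring
      rw [e]; linarith
    linarith
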